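/- Let 1 < p, q < ∞ with 1/p + 1/q = 1, let r ∈ ℕ with r ≥ 2, s = r^(1/p), t = r^(1/q). Let x be a finitely supported real sequence whose nonzero coordinates are all of the form ±s^j (j ∈ ℤ), and let y be a finitely supported real sequence whose nonzero coordinates are all of the form ±t^j (j ∈ ℤ) with Σᵢ|y(i)|^q ≤ 1. Then |Σᵢ x(i)y(i)| ≤ 1 + (Σᵢ|x(i)|^p)/t. -/

import Mathlib

theorem pairing_estimate (p q : ℝ) (hp : 1 < p) (hq : 1 < q)
    (hpq : 1 / p + 1 / q = 1) (r : ℕ) (hr : 2 ≤ r)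
    (s t : ℝ) (hs : s = (r : ℝ) ^ (1 / p : ℝ)) (ht : t = (r : ℝ) ^ (1 / q : ℝ))
    (x y : ℕ →₀ ℝ)
    (hxC : ∀ i, x i ≠ 0 → ∃ j : ℤ, |x i| = s ^ j)
    (hyC : ∀ i, y i ≠ 0 → ∃ j : ℤ, |y i| = t ^ j)
    (hynorm : ∑ i ∈ y.support, |y i| ^ q ≤ 1) :
    |∑ i ∈ x.support, x i * y i| ≤ 1 + (∑ i ∈ x.support, |x i| ^ p) / t := by
  have hr1 : (1:ℝ) < r := by exact_mod_cast Nat.lt_of_lt_of_le one_lt_two hr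
  have hr0 : (0:ℝ) < r := by linarith
  have hp0 : 0 < p := by linarith
  have hq0 : 0 < q := by linarith
  have ht0 : 0 < t := ht ▸ Real.rpow_pos_of_pos hr0 _
  have hs0 : 0 < s := hs ▸ Real.rpow_pos_of_pos hr0 _
  have hpq' : q + p = p * q := by field_simp at hpq; linarith
  have key : ∀ i ∈ x.support, |x i * y i| ≤ |y i| ^ q + |x i| ^ p / t := by
    intro i hi
    by_cases hy0 : y i = 0
    · simp only [hy0, mul_zero, abs_zero, Real.zero_rpow (by linarith : q ≠ 0)]
      positivity
    · obtain ⟨j, hxj⟩ := hxC i (Finsupp.mem_support_iff.mp hi)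
      obtain ⟨k, hyk⟩ := hyC i hy0
      have hxj' : |x i| = (r:ℝ) ^ ((j:ℝ)/p) := by
        rw [hxj, hs, ← Real.rpow_intCast ((r:ℝ) ^ (1/p : ℝ)) j,
          ← Real.rpow_mul hr0.le]
        ring_nf
      have hyk' : |y i| = (r:ℝ) ^ ((k:ℝ)/q) := by
        rw [hyk, ht, ← Real.rpow_intCast ((r:ℝ) ^ (1/q : ℝ)) k,
          ← Real.rpow_mul hr0.le]
        ring_nf
      have hxp : |x i| ^ p = (r:ℝ) ^ (j:ℝ) := by
        rw [hxj', ← Real.rpow_mul hr0.le, div_mul_cancel₀ _ hp0.ne']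
      have hyq : |y i| ^ q = (r:ℝ) ^ (k:ℝ) := by
        rw [hyk', ← Real.rpow_mul hr0.le, div_mul_cancel₀]
        exact hq0.ne'
      have habs : |x i * y i| = (r:ℝ) ^ ((j:ℝ)/p + (k:ℝ)/q) := by
        rw [abs_mul, hxj', hyk', ← Real.rpow_add hr0]
      rw [habs, hxp, hyq]
      rcases le_or_gt j k with hjk | hjk
      · have hjk' : (j:ℝ) ≤ k := by exact_mod_cast hjk
        have hexp : (j:ℝ)/p + (k:ℝ)/q ≤ (k:ℝ) := by
          have h1 : (j:ℝ)/p ≤ (k:ℝ)/p := by gcongr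
          have h2 : (k:ℝ)/p + (k:ℝ)/q = k := by
            field_simp
            linear_combination (k:ℝ) * hpq'
          linarith
        have := Real.rpow_le_rpow_of_exponent_le hr1.le hexp
        have hpos : (0:ℝ) < (r:ℝ) ^ (j:ℝ) / t := by positivity
        linarith
      · have hjk' : (k:ℝ) ≤ (j:ℝ) - 1 := by
          have : (k:ℝ) + 1 ≤ j := by exact_mod_cast hjk
          linarith
        have hexp : (j:ℝ)/p + (k:ℝ)/q ≤ (j:ℝ) - 1/q := by
          have h1 : (k:ℝ)/q ≤ ((j:ℝ) - 1)/q := by gcongr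
          have h2 : (j:ℝ)/p + (j:ℝ)/q = j := by
            field_simp
            linear_combination (j:ℝ) * hpq'
          have h3 : ((j:ℝ) - 1)/q = (j:ℝ)/q - 1/q := by ring
          linarith
        have hle := Real.rpow_le_rpow_of_exponent_le hr1.le hexp
        have heq : (r:ℝ) ^ ((j:ℝ) - 1/q) = (r:ℝ) ^ (j:ℝ) / t := by
          rw [Real.rpow_sub hr0, ht]
        have hpos : (0:ℝ) < (r:ℝ) ^ (k:ℝ) := by positivity
        rw [heq] at hle
        linarith
  have hysum : ∑ i ∈ x.support, |y i| ^ q ≤ 1 := by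
    have h1 : ∑ i ∈ x.support, |y i| ^ q
        = ∑ i ∈ x.support ∩ y.support, |y i| ^ q := by
      refine (Finset.sum_subset (Finset.inter_subset_left) ?_).symm
      intro i hi hni
      have : y i = 0 := by
        by_contra h
        exact hni (Finset.mem_inter.mpr ⟨hi, Finsupp.mem_support_iff.mpr h⟩)
      simp [this, Real.zero_rpow (by linarith : q ≠ 0)]
    have h2 : ∑ i ∈ x.support ∩ y.support, |y i| ^ q
        ≤ ∑ i ∈ y.support, |y i| ^ q := by
      refine Finset.sum_le_sum_of_subset_of_nonneg (Finset.inter_subset_right) ?_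
      intro i _ _
      positivity
    linarith
  calc |∑ i ∈ x.support, x i * y i|
      ≤ ∑ i ∈ x.support, |x i * y i| := Finset.abs_sum_le_sum_abs _ _
    _ ≤ ∑ i ∈ x.support, (|y i| ^ q + |x i| ^ p / t) := Finset.sum_le_sum key
    _ = (∑ i ∈ x.support, |y i| ^ q) + (∑ i ∈ x.support, |x i| ^ p) / t := by
        rw [Finset.sum_add_distrib, Finset.sum_div]
    _ ≤ 1 + (∑ i ∈ x.support, |x i| ^ p) / t := by linarith
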